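/- Let f*: ℝ^d → ℝ be a differentiable convex function and x_0, …, x_d ∈ ℝ^d be d+1 points such that the origin 0 lies in the interior of conv{x_0,…,x_d}. For each i let v_i be the unique point satisfying v_i · x_j = ∇f*(x_j) · x_j for all j ≠ i. Then every vertex satisfies v_i · x_i ≤ ∇f*(x_i) · x_i; in particular v_i belongs to the set of feasible gradients A = {v ∈ ℝ^d : v · x_k ≤ ∇f*(x_k) · x_k for all k = 0,…,d}. -/

import Mathlib

open InnerProductSpace Finset

lemma grad_ray_mono {E : Type*} [NormedAddCommGroup E] [InnerProductSpace ℝ E] [CompleteSpace E]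
    (f : E → ℝ) (hf : ConvexOn ℝ Set.univ f) (hdf : Differentiable ℝ f) (y : E) :
    (inner ℝ (gradient f 0) y : ℝ) ≤ inner ℝ (gradient f y) y := by
  set g : ℝ → ℝ := fun t => f (t • y) with hg
  have hderiv : ∀ t : ℝ, HasDerivAt g (inner ℝ (gradient f (t • y)) y : ℝ) t := by
    intro t
    have h1 : HasFDerivAt f (toDualMap ℝ E (gradient f (t • y))) (t • y) :=
      hasGradientAt_iff_hasFDerivAt.mp (hdf (t • y)).hasGradientAt
    have h2 : HasDerivAt (fun s : ℝ => s • y) y t := by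
      simpa using (hasDerivAt_id t).smul_const y
    simpa [hg, Function.comp_def] using h1.comp_hasDerivAt t h2
  have hgc : ConvexOn ℝ Set.univ g := by
    have := hf.comp_affineMap (LinearMap.toSpanSingleton ℝ E y).toAffineMap
    simpa [Set.preimage_univ, hg, Function.comp_def] using this
  have hmono := hgc.monotoneOn_deriv (fun t _ => (hderiv t).differentiableAt)
  have h01 : deriv g 0 ≤ deriv g 1 :=
    hmono (Set.mem_univ 0) (Set.mem_univ 1) zero_le_one
  rw [(hderiv 0).deriv, (hderiv 1).deriv] at h01
  simpa using h01

lemma exists_weights {E : Type*} [NormedAddCommGroup E] [NormedSpace ℝ E]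
    {n : ℕ} (x : Fin n → E) (hx : (0 : E) ∈ interior (convexHull ℝ (Set.range x)))
    (i : Fin n) :
    ∃ lam : Fin n → ℝ, (∀ j, 0 ≤ lam j) ∧ 0 < lam i ∧ ∑ j, lam j • x j = 0 := by
  have hcont : ContinuousAt (fun t : ℝ => -t • x i) 0 := by fun_prop
  have hmem : ∀ᶠ t in nhds (0 : ℝ), -t • x i ∈ interior (convexHull ℝ (Set.range x)) := by
    have := hcont.eventually_mem (isOpen_interior.mem_nhds (by simpa using hx))
    simpa using this
  obtain ⟨ε, hεmem, hε⟩ :=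
    ((eventually_nhdsWithin_of_eventually_nhds (s := Set.Ioi (0:ℝ)) hmem).and
      self_mem_nhdsWithin).exists
  have hεc : -ε • x i ∈ convexHull ℝ (Set.range x) := interior_subset hεmem
  rw [convexHull_range_eq_exists_affineCombination] at hεc
  obtain ⟨s, w, hw0, hw1, hcomb⟩ := hεc
  rw [affineCombination_eq_linear_combination s x w hw1] at hcomb
  refine ⟨fun j => (if j ∈ s then w j else 0) + (if j = i then ε else 0), ?_, ?_, ?_⟩
  · intro j
    have : (0:ℝ) ≤ if j ∈ s then w j else 0 := by split <;> [exact hw0 j ‹_›; rfl]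
    have h2 : (0:ℝ) ≤ if j = i then ε else 0 := by split <;> [exact hε.le; rfl]
    dsimp only
    linarith
  · have : (0:ℝ) < if i = i then ε else 0 := by simp [hε]
    have h1 : (0:ℝ) ≤ if i ∈ s then w i else 0 := by split <;> [exact hw0 i ‹_›; rfl]
    dsimp only
    linarith
  · have h1 : ∑ j, (if j ∈ s then w j else 0) • x j = ∑ j ∈ s, w j • x j := by
      rw [← Finset.sum_filter_of_ne (p := fun j => j ∈ s)]
      · rw [Finset.filter_mem_eq_inter, Finset.univ_inter]
        exact Finset.sum_congr rfl fun j hj => by simp [hj]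
      · intro j _ hne
        by_contra hns
        simp [hns] at hne
    have h2 : ∑ j, (if j = i then ε else 0) • x j = ε • x i := by
      simp [ite_smul]
    simp only [add_smul, Finset.sum_add_distrib, h1, h2, hcomb]
    simp

/-- For a differentiable convex `f : ℝ^d → ℝ` and points
`x 0, …, x d` whose convex hull contains the origin in its interior, the vertices
`v i` (defined by `v i · x j = ∇f(x j) · x j` for `j ≠ i`) satisfy
`v i · x k ≤ ∇f(x k) · x k` for every `k`; in particular each `v i` belongs to the
set of feasible gradients `A`. -/
theorem statement2 (d : ℕ)
    (f : EuclideanSpace ℝ (Fin d) → ℝ)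
    (hf : ConvexOn ℝ Set.univ f) (hdf : Differentiable ℝ f)
    (x : Fin (d + 1) → EuclideanSpace ℝ (Fin d))
    (hx : (0 : EuclideanSpace ℝ (Fin d)) ∈ interior (convexHull ℝ (Set.range x)))
    (v : Fin (d + 1) → EuclideanSpace ℝ (Fin d))
    (hv : ∀ i j, j ≠ i → (inner ℝ (v i) (x j) : ℝ) = inner ℝ (gradient f (x j)) (x j)) :
    ∀ i, v i ∈ {w : EuclideanSpace ℝ (Fin d) |
      ∀ k, (inner ℝ w (x k) : ℝ) ≤ inner ℝ (gradient f (x k)) (x k)} := by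
  intro i k
  rcases eq_or_ne k i with rfl | hki
  swap
  · exact le_of_eq (hv i k hki)
  obtain ⟨lam, hlam0, hlami, hlamsum⟩ := exists_weights x hx k
  set G : Fin (d + 1) → ℝ := fun j => inner ℝ (gradient f (x j)) (x j) with hG
  have hzero : ∀ w : EuclideanSpace ℝ (Fin d), ∑ j, lam j * (inner ℝ w (x j) : ℝ) = 0 := by
    intro w
    have h : (inner ℝ w (∑ j, lam j • x j) : ℝ) = 0 := by rw [hlamsum]; exact inner_zero_right w
    rw [inner_sum] at h
    simp only [real_inner_smul_right] at h
    exact h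
  have hA : lam k * (inner ℝ (v k) (x k) : ℝ) +
      ∑ j ∈ Finset.univ.erase k, lam j * G j = 0 := by
    have := hzero (v k)
    rw [← Finset.add_sum_erase _ _ (Finset.mem_univ k)] at this
    rw [← this]
    congr 1
    exact Finset.sum_congr rfl fun j hj => by
      rw [hv k j (Finset.ne_of_mem_erase hj)]
  have hC : 0 ≤ lam k * G k + ∑ j ∈ Finset.univ.erase k, lam j * G j := by
    have hterm : ∀ j, lam j * (inner ℝ (gradient f 0) (x j) : ℝ) ≤ lam j * G j := fun j =>
      mul_le_mul_of_nonneg_left (grad_ray_mono f hf hdf (x j)) (hlam0 j)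
    have h0 : ∑ j, lam j * (inner ℝ (gradient f 0) (x j) : ℝ) = 0 := hzero _
    have := Finset.sum_le_sum (fun j (_ : j ∈ Finset.univ) => hterm j)
    rw [Finset.add_sum_erase _ (fun j => lam j * G j) (Finset.mem_univ k)]
    linarith [this, h0]
  have : lam k * (inner ℝ (v k) (x k) : ℝ) ≤ lam k * G k := by linarith
  exact le_of_mul_le_mul_left this hlami
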